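/- Let (W,S) be a Coxeter system with Bruhat order, s ∈ S, and u ≤ w in W with u < us and w < ws. Define η : [u,w] × [1,s] → [u,ws] by η(v,1) = v, and η(v,s) = vs if vs > v, η(v,s) = v if vs < v (here [1,s] is a two-element chain). Then η is well-defined and is an order-projection. -/

import Mathlib

/-- Bruhat order on a Coxeter group, defined via the subword property:
`u ≤ v` iff some reduced word for `v` contains a reduced word for `u` as a subword. -/
def bruhatLE {B W : Type*} [Group W] {M : CoxeterMatrix B}
    (cs : CoxeterSystem M W) (u v : W) : Prop :=
  ∃ lv lu : List B, cs.IsReduced lv ∧ cs.wordProd lv = v ∧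
    cs.IsReduced lu ∧ cs.wordProd lu = u ∧ lu.Sublist lv

/-- Strict Bruhat order. -/
def bruhatLT {B W : Type*} [Group W] {M : CoxeterMatrix B}
    (cs : CoxeterSystem M W) (u v : W) : Prop :=
  bruhatLE cs u v ∧ u ≠ v

open scoped Classical in
/-- The map `η : [u,w] × [1,s] → [u,ws]`: `η(v,1) = v`; `η(v,s) = vs` if `vs > v`,
and `η(v,s) = v` if `vs < v`.  The chain `[1,s]` is encoded as `Bool`, `false = 1`. -/
noncomputable def etaMap {B W : Type*} [Group W] {M : CoxeterMatrix B}
    (cs : CoxeterSystem M W) (s : B) (v : W) (b : Bool) : W :=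
  if b then (if bruhatLT cs v (v * cs.simple s) then v * cs.simple s else v) else v

namespace BruhatAux

open CoxeterSystem List

variable {B W : Type*} [Group W] {M : CoxeterMatrix B} (cs : CoxeterSystem M W)

local prefix:100 "σ" => cs.simple
local prefix:100 "π" => cs.wordProd
local prefix:100 "ℓ" => cs.length

open scoped Classical

/-- The Tits involution attached to a generator, acting on `W × ℤˣ`. -/
noncomputable def titsFn (i : B) : W × ℤˣ → W × ℤˣ :=
  fun p => (σ i * p.1 * σ i, p.2 * (if p.1 = σ i then (-1 : ℤˣ) else 1))

theorem conj_simple_eq_iff (i : B) (x : W) : σ i * x * σ i = σ i ↔ x = σ i := by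
  have hss : σ i * σ i = 1 := cs.simple_mul_simple_self i
  constructor
  · intro h
    have h2 := congrArg (fun y => σ i * y * σ i) h
    simpa [mul_assoc, hss] using h2
  · intro h
    rw [h, mul_assoc, hss, mul_one]

theorem titsFn_involutive (i : B) : Function.Involutive (titsFn cs i) := by
  intro p
  obtain ⟨t, e⟩ := p
  have hss : σ i * σ i = 1 := cs.simple_mul_simple_self i
  by_cases hp : t = σ i
  · simp [titsFn, hp, conj_simple_eq_iff, mul_assoc, hss]
  · have h1 : ¬ (σ i * t * σ i = σ i) := fun hc => hp ((conj_simple_eq_iff cs i t).mp hc)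
    simp only [titsFn, if_neg hp, mul_one, if_neg h1]
    refine Prod.ext ?_ rfl
    show σ i * (σ i * t * σ i) * σ i = t
    calc σ i * (σ i * t * σ i) * σ i = (σ i * σ i) * t * (σ i * σ i) := by group
    _ = t := by rw [hss]; group

/-- The Tits permutation attached to a generator. -/
noncomputable def tits (i : B) : Equiv.Perm (W × ℤˣ) :=
  (titsFn_involutive cs i).toPerm

theorem tits_apply (i : B) (t : W) (e : ℤˣ) :
    tits cs i (t, e) = (σ i * t * σ i, e * (if t = σ i then (-1 : ℤˣ) else 1)) := rfl

/-- Product formula: applying the product of Tits permutations of a word. -/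
theorem prod_map_tits_apply (ω : List B) (t : W) (e : ℤˣ) :
    (ω.map (tits cs)).prod (t, e) =
      (π ω * t * (π ω)⁻¹, e * (-1) ^ ((cs.rightInvSeq ω).count t)) := by
  induction ω generalizing e with
  | nil => simp [wordProd_nil]
  | cons i ω ih =>
    rw [List.map_cons, List.prod_cons, Equiv.Perm.mul_apply, ih, tits_apply,
      wordProd_cons, rightInvSeq]
    have hinv : (σ i * π ω)⁻¹ = (π ω)⁻¹ * σ i := by
      rw [mul_inv_rev, cs.inv_simple]
    rw [List.count_cons, Prod.mk.injEq]
    constructor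
    · rw [hinv]; group
    · by_cases ht : π ω * t * (π ω)⁻¹ = σ i
      · have ht' : (π ω)⁻¹ * σ i * π ω = t := by rw [← ht]; group
        rw [if_pos ht, if_pos (by simpa using ht'), pow_add, pow_one, mul_assoc]
      · have ht' : ¬ ((π ω)⁻¹ * σ i * π ω = t) := by
          intro h; apply ht; rw [← h]; group
        rw [if_neg ht, if_neg (by simpa using ht'), add_zero, mul_one]


theorem simple'_mul_pow (i i' : B) (k : ℕ) :
    σ i' * (σ i * σ i') ^ k = ((σ i * σ i')⁻¹) ^ k * σ i' := by
  induction k with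
  | zero => simp
  | succ k ih =>
    have h1 : σ i' * (σ i * σ i') = (σ i * σ i')⁻¹ * σ i' := by
      rw [mul_inv_rev, cs.inv_simple, cs.inv_simple]
      have := cs.simple_mul_simple_self i'
      calc σ i' * (σ i * σ i') = σ i' * σ i * σ i' := by group
      _ = σ i' * σ i * σ i' := rfl
    rw [pow_succ, ← mul_assoc, ih, mul_assoc, h1, pow_succ]
    group

theorem rightInvSeq_alternatingWord (i i' : B) (N : ℕ) :
    cs.rightInvSeq (alternatingWord i i' N) =
      (List.range N).map (fun j => σ i' * (σ i * σ i') ^ (N - 1 - j)) := by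
  induction N with
  | zero => simp [alternatingWord]
  | succ N ih =>
    rw [alternatingWord_succ' i i' N]
    show ((π (alternatingWord i i' N))⁻¹ * σ (if Even N then i' else i)
        * π (alternatingWord i i' N)) :: cs.rightInvSeq (alternatingWord i i' N) = _
    rw [ih, List.range_succ_eq_map, List.map_cons, List.map_map]
    congr 1
    · -- head computation
      rw [cs.prod_alternatingWord_eq_mul_pow i i' N, Nat.succ_sub_one]
      rcases Nat.even_or_odd N with hN | hN
      · obtain ⟨a, rfl⟩ := hN
        rw [if_pos ⟨a, rfl⟩, if_pos ⟨a, rfl⟩, one_mul,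
          show (a + a) / 2 = a from by omega]
        calc ((σ i * σ i') ^ a)⁻¹ * σ i' * (σ i * σ i') ^ a
            = ((σ i * σ i')⁻¹) ^ a * (σ i' * (σ i * σ i') ^ a) := by
              rw [inv_pow, mul_assoc]
          _ = ((σ i * σ i')⁻¹) ^ a * (((σ i * σ i')⁻¹) ^ a * σ i') := by
              rw [simple'_mul_pow]
          _ = ((σ i * σ i')⁻¹) ^ (a + a) * σ i' := by rw [pow_add]; simp [mul_assoc]
          _ = σ i' * (σ i * σ i') ^ (a + a) := (simple'_mul_pow cs i i' _).symm
      · obtain ⟨a, rfl⟩ := hN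
        have hne : ¬ Even (2 * a + 1) := by simp [Nat.even_add_one, parity_simps]
        rw [if_neg hne, if_neg hne, show (2 * a + 1) / 2 = a from by omega]
        have h3 : σ i' * σ i * σ i' = (σ i * σ i')⁻¹ * σ i' := by
          rw [mul_inv_rev, cs.inv_simple, cs.inv_simple]
        calc (σ i' * (σ i * σ i') ^ a)⁻¹ * σ i * (σ i' * (σ i * σ i') ^ a)
            = ((σ i * σ i')⁻¹) ^ a * ((σ i' * σ i * σ i') * (σ i * σ i') ^ a) := by
              rw [mul_inv_rev, inv_pow, cs.inv_simple]
              simp [mul_assoc]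
          _ = ((σ i * σ i')⁻¹) ^ a * (((σ i * σ i')⁻¹ * σ i') * (σ i * σ i') ^ a) := by
              rw [h3]
          _ = ((σ i * σ i')⁻¹) ^ a * ((σ i * σ i')⁻¹ *
                (((σ i * σ i')⁻¹) ^ a * σ i')) := by rw [mul_assoc, simple'_mul_pow]
          _ = ((σ i * σ i')⁻¹) ^ (2 * a + 1) * σ i' := by
              rw [show 2 * a + 1 = a + 1 + a from by omega, pow_add, pow_add, pow_one]
              simp [mul_assoc]
          _ = σ i' * (σ i * σ i') ^ (2 * a + 1) := (simple'_mul_pow cs i i' _).symm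
    · -- tail
      apply List.map_congr_left
      intro j hj
      simp only [Function.comp]
      congr 2
      omega

theorem tits_liftable : M.IsLiftable (tits cs) := by
  intro i i'
  set m := M i i' with hm
  have hword : ∀ k : ℕ, (tits cs i * tits cs i') ^ k
      = ((alternatingWord i i' (2 * k)).map (tits cs)).prod := by
    intro k
    induction k with
    | zero => simp [alternatingWord]
    | succ k ih =>
      have h2 : 2 * (k + 1) = (2 * k + 1) + 1 := by ring
      have hodd : ¬ Even (2 * k + 1) := by simp [Nat.even_add_one, parity_simps]
      rw [h2, alternatingWord_succ', alternatingWord_succ', if_neg hodd,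
        if_pos (even_two_mul k), List.map_cons, List.map_cons, List.prod_cons,
        List.prod_cons, ← ih, pow_succ']
      rw [mul_assoc]
  rw [hword m]
  apply Equiv.ext
  rintro ⟨t, e⟩
  rw [prod_map_tits_apply]
  have hprod : π (alternatingWord i i' (2 * m)) = 1 := by
    rw [cs.prod_alternatingWord_eq_mul_pow, if_pos (even_two_mul m),
      show 2 * m / 2 = m from by omega, one_mul, hm, cs.simple_mul_simple_pow]
  have hcount : ∃ c, (cs.rightInvSeq (alternatingWord i i' (2 * m))).count t = c + c := by
    rw [rightInvSeq_alternatingWord, two_mul, List.range_add, List.map_append,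
      List.map_map, List.count_append]
    have heq : (List.range m).map (fun j => σ i' * (σ i * σ i') ^ (m + m - 1 - j))
        = (List.range m).map ((fun j => σ i' * (σ i * σ i') ^ (m + m - 1 - j)) ∘ (m + ·)) := by
      apply List.map_congr_left
      intro j hj
      rw [List.mem_range] at hj
      simp only [Function.comp]
      congr 1
      rcases Nat.eq_zero_or_pos m with h0 | h0
      · omega
      · rw [show m + m - 1 - j = m + (m - 1 - j) from by omega,
          show m + m - 1 - (m + j) = m - 1 - j from by omega, pow_add, hm,
          cs.simple_mul_simple_pow, one_mul]
    rw [← heq]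
    exact ⟨_, rfl⟩
  obtain ⟨c, hc⟩ := hcount
  rw [hprod, hc, Equiv.Perm.one_apply, pow_add, Int.units_mul_self, mul_one]
  simp

/-- The Tits representation `W →* Perm (W × ℤˣ)`. -/
noncomputable def titsHom : W →* Equiv.Perm (W × ℤˣ) :=
  cs.lift ⟨tits cs, tits_liftable cs⟩

theorem titsHom_simple (i : B) : titsHom cs (σ i) = tits cs i :=
  cs.lift_apply_simple (tits_liftable cs) i

theorem titsHom_wordProd (ω : List B) :
    titsHom cs (π ω) = (ω.map (tits cs)).prod := by
  induction ω with
  | nil => simp [wordProd_nil]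
  | cons i ω ih => rw [wordProd_cons, map_mul, titsHom_simple, List.map_cons,
      List.prod_cons, ih]

/-- The sign of `t` at `w`. -/
noncomputable def nsgn (w t : W) : ℤˣ := ((titsHom cs w) (t, 1)).2

theorem nsgn_eq_of_word (ω : List B) (t : W) :
    nsgn cs (π ω) t = (-1) ^ ((cs.rightInvSeq ω).count t) := by
  rw [nsgn, titsHom_wordProd, prod_map_tits_apply, one_mul]

theorem titsHom_apply (w t : W) (e : ℤˣ) :
    titsHom cs w (t, e) = (w * t * w⁻¹, e * nsgn cs w t) := by
  obtain ⟨ω, _, rfl⟩ := cs.exists_reduced_word' w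
  rw [titsHom_wordProd, prod_map_tits_apply, nsgn_eq_of_word]

theorem nsgn_one (t : W) : nsgn cs 1 t = 1 := by
  rw [nsgn, map_one]
  rfl

theorem nsgn_cocycle (x y t : W) :
    nsgn cs (x * y) t = nsgn cs y t * nsgn cs x (y * t * y⁻¹) := by
  have h1 : titsHom cs (x * y) (t, 1) = titsHom cs x (titsHom cs y (t, 1)) := by
    rw [map_mul]; rfl
  rw [titsHom_apply cs y, titsHom_apply cs x, titsHom_apply cs (x * y)] at h1
  have h2 := congrArg Prod.snd h1
  simpa using h2

theorem nsgn_simple (i : B) (t : W) :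
    nsgn cs (σ i) t = if t = σ i then -1 else 1 := by
  have h := nsgn_eq_of_word cs [i] t
  rw [cs.wordProd_singleton] at h
  rw [h, cs.rightInvSeq_singleton]
  by_cases ht : t = σ i
  · rw [if_pos ht, ht]
    simp
  · rw [if_neg ht, List.count_singleton']
    simp [beq_iff_eq, Ne.symm ht]

theorem nsgn_self {t : W} (ht : cs.IsReflection t) : nsgn cs t t = -1 := by
  obtain ⟨u, j, rfl⟩ := ht
  have key : u⁻¹ * (u * σ j * u⁻¹) * u = σ j := by group
  have c3 := nsgn_cocycle cs u u⁻¹ (u * σ j * u⁻¹)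
  rw [mul_inv_cancel, nsgn_one, inv_inv, key] at c3
  have c2 := nsgn_cocycle cs (σ j) u⁻¹ (u * σ j * u⁻¹)
  rw [inv_inv, key, nsgn_simple, if_pos rfl] at c2
  have c1 := nsgn_cocycle cs u (σ j * u⁻¹) (u * σ j * u⁻¹)
  rw [show u * (σ j * u⁻¹) = u * σ j * u⁻¹ from by group,
    show σ j * u⁻¹ * (u * σ j * u⁻¹) * (σ j * u⁻¹)⁻¹ = σ j from by group] at c1
  rw [c1, c2, mul_neg_one, neg_mul, ← c3]

theorem nsgn_mul_self {t : W} (ht : cs.IsReflection t) (w : W) :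
    nsgn cs (w * t) t = - nsgn cs w t := by
  have htt : t * t * t⁻¹ = t := by group
  rw [nsgn_cocycle, htt, nsgn_self cs ht, neg_one_mul]

theorem nsgn_neg_of_inversion {t : W} (ht : cs.IsReflection t) {w : W}
    (hlen : ℓ (w * t) < ℓ w) : nsgn cs w t = -1 := by
  by_contra hne
  have h1 : nsgn cs w t = 1 := (Int.units_eq_one_or _).resolve_right hne
  -- then nsgn (w*t) t = -1, so t ∈ ris ρ for reduced ρ of w*t, so ℓ (w*t*t) < ℓ (w*t)
  have h2 : nsgn cs (w * t) t = -1 := by rw [nsgn_mul_self cs ht, h1]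
  obtain ⟨ρ, hρ, hw⟩ := cs.exists_reduced_word' (w * t)
  have h3 : t ∈ cs.rightInvSeq ρ := by
    have := nsgn_eq_of_word cs ρ t
    rw [← hw, h2] at this
    by_contra hmem
    rw [List.count_eq_zero_of_not_mem hmem, pow_zero] at this
    exact absurd this.symm (by decide)
  have h4 := cs.isRightInversion_of_mem_rightInvSeq hρ h3
  rw [← hw] at h4
  have h5 : w * t * t = w := by rw [mul_assoc, ht.mul_self, mul_one]
  have h6 := h4.2
  rw [h5] at h6
  omega

theorem inversion_of_nsgn_neg {t : W} (ht : cs.IsReflection t) {w : W}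
    (hn : nsgn cs w t = -1) : ℓ (w * t) < ℓ w := by
  obtain ⟨ρ, hρ, hw⟩ := cs.exists_reduced_word' w
  have h3 : t ∈ cs.rightInvSeq ρ := by
    have := nsgn_eq_of_word cs ρ t
    rw [← hw, hn] at this
    by_contra hmem
    rw [List.count_eq_zero_of_not_mem hmem, pow_zero] at this
    exact absurd this.symm (by decide)
  have h4 := cs.isRightInversion_of_mem_rightInvSeq hρ h3
  rw [← hw] at h4
  exact h4.2

/-- Strong exchange property. -/
theorem strong_exchange (ω : List B) {t : W} (ht : cs.IsReflection t)
    (hlen : ℓ (π ω * t) < ℓ (π ω)) :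
    ∃ j < ω.length, π ω * t = π (ω.eraseIdx j) := by
  have hn : nsgn cs (π ω) t = -1 := nsgn_neg_of_inversion cs ht hlen
  have hmem : t ∈ cs.rightInvSeq ω := by
    have := nsgn_eq_of_word cs ω t
    rw [hn] at this
    by_contra hmem
    rw [List.count_eq_zero_of_not_mem hmem, pow_zero] at this
    exact absurd this (by decide)
  obtain ⟨j, hj, hget⟩ := List.mem_iff_getElem.mp hmem
  rw [cs.length_rightInvSeq] at hj
  refine ⟨j, hj, ?_⟩
  have := cs.wordProd_mul_getD_rightInvSeq ω j
  rw [List.getD_eq_getElem _ 1 (by rw [cs.length_rightInvSeq]; exact hj), hget] at this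
  exact this

/-- Deletion property: every word contains a reduced sublist with the same product. -/
theorem exists_reduced_sublist (ω : List B) :
    ∃ l, l.Sublist ω ∧ cs.IsReduced l ∧ π l = π ω := by
  by_cases hred : cs.IsReduced ω
  · exact ⟨ω, List.Sublist.refl ω, hred, rfl⟩
  · have hne : ω ≠ [] := by rintro rfl; exact hred (by simp [CoxeterSystem.IsReduced, wordProd_nil])
    have hex : ∃ k, ¬ cs.IsReduced (ω.take (k + 1)) := by
      refine ⟨ω.length - 1, ?_⟩
      rwa [show ω.length - 1 + 1 = ω.length from by
        have := List.length_pos_iff.mpr hne; omega, List.take_length]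
    classical
    obtain ⟨k, hk, hmin⟩ : ∃ k, ¬ cs.IsReduced (ω.take (k + 1)) ∧
        ∀ m, m < k → cs.IsReduced (ω.take (m + 1)) := by
      refine ⟨Nat.find hex, Nat.find_spec hex, ?_⟩
      intro m hm
      by_contra hc
      exact absurd (Nat.find_le (h := hex) hc) (by omega)
    have hkred : cs.IsReduced (ω.take k) := by
      rcases Nat.eq_zero_or_pos k with h0 | h0
      · rw [h0]; simp [CoxeterSystem.IsReduced, wordProd_nil]
      · have := hmin (k - 1) (by omega)
        rwa [show k - 1 + 1 = k from by omega] at this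
    have hklt : k < ω.length := by
      by_contra hc
      push_neg at hc
      rw [List.take_of_length_le (by omega)] at hkred
      exact hred hkred
    have htake : ω.take (k + 1) = ω.take k ++ [ω.get ⟨k, hklt⟩] := by
      rw [← List.take_concat_get hklt]
      simp [List.concat_eq_append]
    set c := ω.get ⟨k, hklt⟩ with hc
    have hlen1 : ℓ (π (ω.take k) * σ c) < ℓ (π (ω.take k)) := by
      have hlen0 : ℓ (π (ω.take (k + 1))) ≠ (ω.take (k + 1)).length := hk
      have hlen2 : (ω.take (k + 1)).length = k + 1 := by
        rw [List.length_take]; omega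
      have hπ : π (ω.take (k + 1)) = π (ω.take k) * σ c := by
        rw [htake, wordProd_append, wordProd_singleton]
      have hle : ℓ (π (ω.take k)) = k := by
        have := hkred; rwa [CoxeterSystem.IsReduced, List.length_take, min_eq_left (by omega)] at this
      rcases cs.length_mul_simple (π (ω.take k)) c with h | h
      · exfalso
        apply hlen0
        rw [hπ, h, hle, hlen2]
      · omega
    obtain ⟨j, hj, hex2⟩ := strong_exchange cs (ω.take k)
      (cs.isReflection_simple c) hlen1
    -- new word
    have hωsplit : ω = ω.take (k + 1) ++ ω.drop (k + 1) := (List.take_append_drop _ _).symm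
    set ω' := (ω.take k).eraseIdx j ++ ω.drop (k + 1) with hω'
    have hπω' : π ω' = π ω := by
      rw [hω', wordProd_append, ← hex2]
      conv_rhs => rw [hωsplit]
      rw [wordProd_append, htake, wordProd_append, wordProd_singleton]
    have hsub : ω'.Sublist ω := by
      conv_rhs => rw [hωsplit]
      rw [htake]
      refine List.Sublist.append ?_ (List.Sublist.refl _)
      exact ((ω.take k).eraseIdx_sublist j).trans (List.sublist_append_left _ _)
    have hjk : j < (ω.take k).length := by
      rw [List.length_take, min_eq_left (by omega)]
      rwa [List.length_take, min_eq_left (by omega)] at hj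
    have hlt : ω'.length < ω.length := by
      have e1 := List.length_eraseIdx_add_one hjk
      have e2 : (ω.take k).length = k := by rw [List.length_take]; omega
      have e3 : (ω.drop (k + 1)).length = ω.length - (k + 1) := List.length_drop
      rw [hω', List.length_append]
      omega
    obtain ⟨l, hl1, hl2, hl3⟩ := exists_reduced_sublist ω'
    exact ⟨l, hl1.trans hsub, hl2, by rw [hl3, hπω']⟩
termination_by ω.length
decreasing_by exact hlt

/-! ### The chain ("Bruhat graph") order and its equivalence with the subword order -/

/-- One step: multiply on the right by a reflection, increasing length. -/
def chainStep (x y : W) : Prop := ∃ t, cs.IsReflection t ∧ y = x * t ∧ ℓ x < ℓ y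

/-- The chain order: reflexive-transitive closure of `chainStep`. -/
def chainLE : W → W → Prop := Relation.ReflTransGen (chainStep cs)

theorem chainStep_smul (i : B) (x : W) (h : ℓ x < ℓ (σ i * x)) :
    chainStep cs x (σ i * x) := by
  refine ⟨x⁻¹ * σ i * x, ⟨x⁻¹, i, by group⟩, by group, ?_⟩
  exact h

theorem chainLE_length_le {u w : W} (h : chainLE cs u w) : ℓ u ≤ ℓ w := by
  induction h with
  | refl => exact le_rfl
  | tail h1 hstep ih =>
    obtain ⟨t, _, _, hlt⟩ := hstep
    omega

theorem Qsingle (n : ℕ)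
    (HP : ∀ ρ lu : List B, cs.IsReduced ρ → ρ.length ≤ n → cs.IsReduced lu →
      lu.Sublist ρ → chainLE cs (π lu) (π ρ))
    {v w : W} (hstep : chainStep cs v w) (hlen : ℓ w ≤ n + 1) (i : B) :
    chainLE cs (σ i * v) w ∨ chainLE cs (σ i * v) (σ i * w) := by
  obtain ⟨t, ht, rfl, hlt⟩ := hstep
  have hcancel : σ i * (σ i * v) = v := by
    rw [← mul_assoc, cs.simple_mul_simple_self, one_mul]
  rcases Nat.lt_or_ge (ℓ (σ i * v)) (ℓ v) with hA | hA
  · -- σ i v < v ≤ vt : go up through v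
    left
    have hs : chainStep cs (σ i * v) v := by
      have := chainStep_smul cs i (σ i * v) (by rwa [hcancel])
      rwa [hcancel] at this
    exact (Relation.ReflTransGen.single hs).tail ⟨t, ht, rfl, hlt⟩
  · have hA' : ℓ v < ℓ (σ i * v) :=
      lt_of_le_of_ne hA (cs.length_simple_mul_ne v i).symm
    have hsv : ℓ (σ i * v) = ℓ v + 1 := by
      rcases cs.length_simple_mul v i with h | h
      · exact h
      · omega
    rcases Nat.lt_or_ge (ℓ (σ i * (v * t))) (ℓ (v * t)) with hB | hB
    · -- descent of w = v t by σ i on the left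
      set w := v * t with hw
      obtain ⟨ρ₁, hρ₁, hw₁⟩ := cs.exists_reduced_word' (σ i * w)
      have hπρ : π (i :: ρ₁) = w := by
        rw [wordProd_cons, ← hw₁, ← mul_assoc, cs.simple_mul_simple_self, one_mul]
      have hlw : ℓ (σ i * w) + 1 = ℓ w := by
        rcases cs.length_simple_mul w i with h | h
        · omega
        · omega
      have hred : cs.IsReduced (i :: ρ₁) := by
        show ℓ (π (i :: ρ₁)) = (i :: ρ₁).length
        rw [hπρ, List.length_cons, ← hρ₁, ← hw₁]
        omega
      have hinv : ℓ (π (i :: ρ₁) * t) < ℓ (π (i :: ρ₁)) := by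
        rw [hπρ, hw, mul_assoc, ht.mul_self, mul_one]
        exact hlt
      obtain ⟨j, hj, hex⟩ := strong_exchange cs (i :: ρ₁) ht hinv
      have hexv : v = π ((i :: ρ₁).eraseIdx j) := by
        rw [← hex, hπρ, hw, mul_assoc, ht.mul_self, mul_one]
      rcases j with _ | k
      · -- v = π ρ₁ = σ i * w, so σ i * v = w
        left
        rw [List.eraseIdx_cons_zero, ← hw₁] at hexv
        rw [show σ i * v = w from by
          rw [hexv, ← mul_assoc, cs.simple_mul_simple_self, one_mul]]
        exact Relation.ReflTransGen.refl
      · -- σ i * v is a subword-product of ρ₁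
        right
        rw [List.eraseIdx_cons_succ, wordProd_cons] at hexv
        have hsiv : σ i * v = π (ρ₁.eraseIdx k) := by
          rw [hexv, ← mul_assoc, cs.simple_mul_simple_self, one_mul]
        obtain ⟨l, hlsub, hlred, hlπ⟩ := exists_reduced_sublist cs (ρ₁.eraseIdx k)
        have hchain := HP ρ₁ l hρ₁
          (by rw [← hρ₁, ← hw₁]; omega) hlred
          (hlsub.trans (ρ₁.eraseIdx_sublist k))
        rw [hlπ, ← hsiv, ← hw₁] at hchain
        exact hchain
    · -- both go up: single step
      right
      refine Relation.ReflTransGen.single ⟨t, ht, by rw [mul_assoc], ?_⟩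
      have hne2 : ℓ (σ i * (v * t)) ≠ ℓ (v * t) := cs.length_simple_mul_ne (v * t) i
      rw [← mul_assoc] at hB hne2 ⊢
      omega

theorem PQ : ∀ n : ℕ,
    (∀ ρ lu : List B, cs.IsReduced ρ → ρ.length ≤ n → cs.IsReduced lu →
      lu.Sublist ρ → chainLE cs (π lu) (π ρ)) ∧
    (∀ u w : W, chainLE cs u w → ℓ w ≤ n → ∀ i : B,
      chainLE cs (σ i * u) w ∨ chainLE cs (σ i * u) (σ i * w)) := by
  intro n
  induction n with
  | zero =>
    constructor
    · intro ρ lu hρ hlen hlu hsub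
      rw [List.length_eq_zero_iff.mp (by omega : ρ.length = 0)] at hsub ⊢
      rw [List.sublist_nil.mp hsub]
      exact Relation.ReflTransGen.refl
    · intro u w hchain hlen i
      have hu : ℓ u = 0 := by
        have := chainLE_length_le cs hchain
        omega
      have hw0 : w = 1 := cs.length_eq_zero_iff.mp (by omega)
      have hu0 : u = 1 := cs.length_eq_zero_iff.mp hu
      right
      rw [hu0, hw0]
      exact Relation.ReflTransGen.refl
  | succ n ih =>
    obtain ⟨HP, HQ⟩ := ih
    have P' : ∀ ρ lu : List B, cs.IsReduced ρ → ρ.length ≤ n + 1 → cs.IsReduced lu →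
        lu.Sublist ρ → chainLE cs (π lu) (π ρ) := by
      intro ρ lu hρ hlen hlu hsub
      cases ρ with
      | nil =>
        rw [List.sublist_nil.mp hsub]
        exact Relation.ReflTransGen.refl
      | cons i ρ₁ =>
        have hρ₁ : cs.IsReduced ρ₁ := by
          have := hρ.drop (j := 1)
          simpa using this
        have hlen₁ : ρ₁.length ≤ n := by
          simp only [List.length_cons] at hlen
          omega
        have hstep : chainStep cs (π ρ₁) (π (i :: ρ₁)) := by
          rw [wordProd_cons]
          apply chainStep_smul
          rw [← wordProd_cons, hρ₁, hρ]
          simp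
        rcases List.sublist_cons_iff.mp hsub with h | ⟨lu₁, rfl, h⟩
        · exact (HP ρ₁ lu hρ₁ hlen₁ hlu h).tail hstep
        · have hlu₁ : cs.IsReduced lu₁ := by
            have := hlu.drop (j := 1)
            simpa using this
          have hchain := HP ρ₁ lu₁ hρ₁ hlen₁ hlu₁ h
          have hQ := HQ _ _ hchain (by rw [hρ₁]; omega) i
          rcases hQ with h1 | h1
          · rw [← wordProd_cons] at h1
            exact h1.tail hstep
          · rw [← wordProd_cons, ← wordProd_cons] at h1
            exact h1
    refine ⟨P', ?_⟩
    intro u w hchain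
    induction hchain with
    | refl =>
      intro _ i
      right
      exact Relation.ReflTransGen.refl
    | tail hc hstep ihc =>
      rename_i v w'
      intro hlen i
      have hltvw : ℓ v < ℓ w' := by obtain ⟨t, _, _, hlt⟩ := hstep; exact hlt
      rcases ihc (by omega) i with h1 | h1
      · exact Or.inl (h1.tail hstep)
      · rcases Qsingle cs n HP hstep hlen i with h2 | h2
        · exact Or.inl (h1.trans h2)
        · exact Or.inr (h1.trans h2)


theorem chain_subword {u w : W} (h : chainLE cs u w) :
    ∀ ρ : List B, cs.IsReduced ρ → π ρ = w →
      ∃ l, cs.IsReduced l ∧ l.Sublist ρ ∧ π l = u := by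
  induction h with
  | refl => exact fun ρ hρ hπ => ⟨ρ, hρ, List.Sublist.refl ρ, hπ⟩
  | tail hc hstep ih =>
    rename_i v w'
    intro ρ hρ hπ
    obtain ⟨t, ht, rfl, hlt⟩ := hstep
    have hcan : π ρ * t = v := by rw [hπ, mul_assoc, ht.mul_self, mul_one]
    have hinv : ℓ (π ρ * t) < ℓ (π ρ) := by rw [hcan, hπ]; exact hlt
    obtain ⟨j, hj, hex⟩ := strong_exchange cs ρ ht hinv
    obtain ⟨l₁, hsub₁, hred₁, hπ₁⟩ := exists_reduced_sublist cs (ρ.eraseIdx j)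
    have hπv : π l₁ = v := by rw [hπ₁, ← hex, hcan]
    obtain ⟨l, hlred, hlsub, hlπ⟩ := ih l₁ hred₁ hπv
    exact ⟨l, hlred, hlsub.trans (hsub₁.trans (ρ.eraseIdx_sublist j)), hlπ⟩

theorem bruhatLE_iff_chainLE {u w : W} : bruhatLE cs u w ↔ chainLE cs u w := by
  constructor
  · rintro ⟨lv, lu, h1, rfl, h3, rfl, h5⟩
    exact (PQ cs lv.length).1 lv lu h1 le_rfl h3 h5
  · intro h
    obtain ⟨ρ, hρ, hπ⟩ := cs.exists_reduced_word' w
    obtain ⟨l, hlred, hlsub, hlπ⟩ := chain_subword cs h ρ hρ hπ.symm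
    exact ⟨ρ, l, hρ, hπ.symm, hlred, hlπ, hlsub⟩

theorem bruhatLE_refl (w : W) : bruhatLE cs w w := by
  obtain ⟨ρ, hρ, hπ⟩ := cs.exists_reduced_word' w
  exact ⟨ρ, ρ, hρ, hπ.symm, hρ, hπ.symm, List.Sublist.refl ρ⟩

theorem bruhatLE_trans {u v w : W} (h1 : bruhatLE cs u v) (h2 : bruhatLE cs v w) :
    bruhatLE cs u w := by
  rw [bruhatLE_iff_chainLE] at h1 h2 ⊢
  exact h1.trans h2

/-- The subword property with respect to an arbitrary reduced word. -/
theorem subword_any {u w : W} (h : bruhatLE cs u w) {ρ : List B}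
    (hρ : cs.IsReduced ρ) (hπ : π ρ = w) :
    ∃ l, cs.IsReduced l ∧ l.Sublist ρ ∧ π l = u :=
  chain_subword cs ((bruhatLE_iff_chainLE cs).mp h) ρ hρ hπ

theorem bruhatLE_length_le {u w : W} (h : bruhatLE cs u w) : ℓ u ≤ ℓ w := by
  obtain ⟨lv, lu, h1, rfl, h3, rfl, h5⟩ := h
  rw [h1, h3]
  exact h5.length_le

theorem bruhatLE_length_lt {u w : W} (h : bruhatLE cs u w) (hne : u ≠ w) :
    ℓ u < ℓ w := by
  obtain ⟨lv, lu, h1, rfl, h3, rfl, h5⟩ := h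
  rw [h1, h3]
  rcases Nat.lt_or_ge lu.length lv.length with hl | hl
  · exact hl
  · exact absurd (congrArg cs.wordProd (h5.eq_of_length (le_antisymm h5.length_le hl)))
      hne

/-- If `ℓ(v) < ℓ(v sᵢ)` then `v ≤ v sᵢ`. -/
theorem le_mul_simple {v : W} {i : B} (h : ℓ v < ℓ (v * σ i)) :
    bruhatLE cs v (v * σ i) := by
  obtain ⟨ρ, hρ, hπ⟩ := cs.exists_reduced_word' v
  have hlen : ℓ (v * σ i) = ℓ v + 1 := by
    rcases cs.length_mul_simple v i with h' | h' <;> omega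
  refine ⟨ρ ++ [i], ρ, ?_, ?_, hρ, hπ.symm, List.sublist_append_left ρ [i]⟩
  · show ℓ (π (ρ ++ [i])) = (ρ ++ [i]).length
    have hv : ℓ v = ρ.length := by rw [hπ]; exact hρ
    rw [wordProd_append, wordProd_singleton, ← hπ, hlen, List.length_append, hv]
    rfl
  · rw [wordProd_append, wordProd_singleton, hπ]

/-- If `ℓ(v sᵢ) < ℓ(v)` then `v sᵢ ≤ v`. -/
theorem mul_simple_le {v : W} {i : B} (h : ℓ (v * σ i) < ℓ v) :
    bruhatLE cs (v * σ i) v := by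
  obtain ⟨ρ₁, hρ₁, hπ₁⟩ := cs.exists_reduced_word' (v * σ i)
  have hcan : v * σ i * σ i = v := by
    rw [mul_assoc, cs.simple_mul_simple_self, mul_one]
  have hlen : ℓ v = ℓ (v * σ i) + 1 := by
    rcases cs.length_mul_simple v i with h' | h' <;> omega
  refine ⟨ρ₁ ++ [i], ρ₁, ?_, ?_, hρ₁, hπ₁.symm, List.sublist_append_left ρ₁ [i]⟩
  · show ℓ (π (ρ₁ ++ [i])) = (ρ₁ ++ [i]).length
    rw [wordProd_append, wordProd_singleton, ← hπ₁, hcan, hlen, hπ₁, hρ₁]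
    simp
  · rw [wordProd_append, wordProd_singleton, ← hπ₁, hcan]

/-- Both ascents: `u ≤ v`, `u < u sᵢ`, `v < v sᵢ` imply `u sᵢ ≤ v sᵢ`. -/
theorem mul_simple_le_mul_simple_of_asc {u v : W} {i : B} (h : bruhatLE cs u v)
    (hu : ℓ u < ℓ (u * σ i)) (hv : ℓ v < ℓ (v * σ i)) :
    bruhatLE cs (u * σ i) (v * σ i) := by
  obtain ⟨lv, lu, h1, rfl, h3, rfl, h5⟩ := h
  have hlu : ℓ (π lu * σ i) = lu.length + 1 := by
    rcases cs.length_mul_simple (π lu) i with h' | h' <;> rw [← h3] <;> omega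
  have hlv : ℓ (π lv * σ i) = lv.length + 1 := by
    rcases cs.length_mul_simple (π lv) i with h' | h' <;> rw [← h1] <;> omega
  refine ⟨lv ++ [i], lu ++ [i], ?_, ?_, ?_, ?_, h5.append (List.Sublist.refl [i])⟩
  · show ℓ (π (lv ++ [i])) = (lv ++ [i]).length
    rw [wordProd_append, wordProd_singleton, hlv]; simp
  · rw [wordProd_append, wordProd_singleton]
  · show ℓ (π (lu ++ [i])) = (lu ++ [i]).length
    rw [wordProd_append, wordProd_singleton, hlu]; simp
  · rw [wordProd_append, wordProd_singleton]

/-- Lifting, ascent case: `u ≤ v`, `u < u sᵢ`, `v sᵢ < v` imply `u ≤ v sᵢ`. -/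
theorem le_mul_simple_of_desc {u v : W} {i : B} (h : bruhatLE cs u v)
    (hu : ℓ u < ℓ (u * σ i)) (hv : ℓ (v * σ i) < ℓ v) :
    bruhatLE cs u (v * σ i) := by
  obtain ⟨ρ₁, hρ₁, hπ₁⟩ := cs.exists_reduced_word' (v * σ i)
  have hcan : v * σ i * σ i = v := by
    rw [mul_assoc, cs.simple_mul_simple_self, mul_one]
  have hlen : ℓ v = ℓ (v * σ i) + 1 := by
    rcases cs.length_mul_simple v i with h' | h' <;> omega
  have hρred : cs.IsReduced (ρ₁ ++ [i]) := by
    show ℓ (π (ρ₁ ++ [i])) = (ρ₁ ++ [i]).length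
    rw [wordProd_append, wordProd_singleton, ← hπ₁, hcan, hlen, hπ₁, hρ₁]
    simp
  have hρπ : π (ρ₁ ++ [i]) = v := by
    rw [wordProd_append, wordProd_singleton, ← hπ₁, hcan]
  obtain ⟨l, hlred, hlsub, hlπ⟩ := subword_any cs h hρred hρπ
  obtain ⟨l₁, l₂, rfl, hsub₁, hsub₂⟩ := List.sublist_append_iff.mp hlsub
  rcases List.sublist_singleton.mp hsub₂ with rfl | rfl
  · rw [List.append_nil] at hlred hlπ
    exact ⟨ρ₁, l₁, hρ₁, hπ₁.symm, hlred, hlπ, hsub₁⟩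
  · -- then u has a reduced word ending in i, contradicting the ascent
    exfalso
    have hπ₂ : π l₁ * σ i = u := by
      rw [← wordProd_singleton, ← wordProd_append, hlπ]
    have hred₁ : ℓ u = l₁.length + 1 := by
      have := hlred
      rw [CoxeterSystem.IsReduced, hlπ] at this
      rw [this]; simp
    have : ℓ (u * σ i) ≤ l₁.length := by
      have : u * σ i = π l₁ := by
        rw [← hπ₂, mul_assoc, cs.simple_mul_simple_self, mul_one]
      rw [this]
      exact cs.length_wordProd_le l₁
    omega

/-- Lifting, descent case: `u ≤ v`, `u sᵢ < u`, `v sᵢ < v` imply `u sᵢ ≤ v sᵢ`. -/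
theorem mul_simple_le_mul_simple_of_desc {u v : W} {i : B} (h : bruhatLE cs u v)
    (hu : ℓ (u * σ i) < ℓ u) (hv : ℓ (v * σ i) < ℓ v) :
    bruhatLE cs (u * σ i) (v * σ i) := by
  obtain ⟨ρ₁, hρ₁, hπ₁⟩ := cs.exists_reduced_word' (v * σ i)
  have hcan : v * σ i * σ i = v := by
    rw [mul_assoc, cs.simple_mul_simple_self, mul_one]
  have hlen : ℓ v = ℓ (v * σ i) + 1 := by
    rcases cs.length_mul_simple v i with h' | h' <;> omega
  have hρred : cs.IsReduced (ρ₁ ++ [i]) := by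
    show ℓ (π (ρ₁ ++ [i])) = (ρ₁ ++ [i]).length
    rw [wordProd_append, wordProd_singleton, ← hπ₁, hcan, hlen, hπ₁, hρ₁]
    simp
  have hρπ : π (ρ₁ ++ [i]) = v := by
    rw [wordProd_append, wordProd_singleton, ← hπ₁, hcan]
  obtain ⟨l, hlred, hlsub, hlπ⟩ := subword_any cs h hρred hρπ
  obtain ⟨l₁, l₂, rfl, hsub₁, hsub₂⟩ := List.sublist_append_iff.mp hlsub
  rcases List.sublist_singleton.mp hsub₂ with rfl | rfl
  · -- u ≤ v sᵢ, hence u sᵢ ≤ u ≤ v sᵢ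
    rw [List.append_nil] at hlred hlπ
    exact bruhatLE_trans cs (mul_simple_le cs hu)
      ⟨ρ₁, l₁, hρ₁, hπ₁.symm, hlred, hlπ, hsub₁⟩
  · -- u sᵢ is the product of the reduced prefix l₁ which is a subword of ρ₁
    have hπ₂ : π l₁ = u * σ i := by
      have : π l₁ * σ i = u := by
        rw [← wordProd_singleton, ← wordProd_append, hlπ]
      rw [← this, mul_assoc, cs.simple_mul_simple_self, mul_one]
    have hred₁ : cs.IsReduced l₁ := by
      have ht := hlred.take (j := l₁.length)
      rwa [List.take_left] at ht
    exact ⟨ρ₁, l₁, hρ₁, hπ₁.symm, hred₁, hπ₂, hsub₁⟩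

theorem bruhatLT_mul_simple_iff {v : W} {i : B} :
    bruhatLT cs v (v * σ i) ↔ ℓ v < ℓ (v * σ i) := by
  constructor
  · rintro ⟨hle, hne⟩
    exact bruhatLE_length_lt cs hle hne
  · intro h
    refine ⟨le_mul_simple cs h, fun hc => ?_⟩
    rw [← hc] at h
    exact lt_irrefl _ h

theorem etaMap_false (i : B) (v : W) : etaMap cs i v false = v := by
  simp [etaMap]

theorem etaMap_true (i : B) (v : W) :
    etaMap cs i v true =
      if bruhatLT cs v (v * σ i) then v * σ i else v := by
  simp [etaMap]

end BruhatAux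

open BruhatAux

/-- `η` is well-defined and is an order-projection from
`[u,w] × [1,s]` onto `[u,ws]`. -/
theorem eta_is_order_projection {B W : Type*} [Group W] {M : CoxeterMatrix B}
    (cs : CoxeterSystem M W) (u w : W) (s : B)
    (huw : bruhatLE cs u w)
    (hu : bruhatLT cs u (u * cs.simple s))
    (hw : bruhatLT cs w (w * cs.simple s)) :
    -- well-defined: η maps [u,w] × [1,s] into [u,ws]
    (∀ (v : W) (b : Bool), bruhatLE cs u v → bruhatLE cs v w →
      bruhatLE cs u (etaMap cs s v b) ∧
      bruhatLE cs (etaMap cs s v b) (w * cs.simple s)) ∧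
    -- order-preserving
    (∀ (v v' : W) (b b' : Bool),
      bruhatLE cs u v → bruhatLE cs v w → bruhatLE cs u v' → bruhatLE cs v' w →
      bruhatLE cs v v' → b ≤ b' →
      bruhatLE cs (etaMap cs s v b) (etaMap cs s v' b')) ∧
    -- order-projection: every relation q ≤ r in [u,ws] is the image of a relation
    (∀ q r : W, bruhatLE cs u q → bruhatLE cs q r → bruhatLE cs r (w * cs.simple s) →
      ∃ (v v' : W) (b b' : Bool),
        bruhatLE cs u v ∧ bruhatLE cs v w ∧ bruhatLE cs u v' ∧ bruhatLE cs v' w ∧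
        bruhatLE cs v v' ∧ b ≤ b' ∧ etaMap cs s v b = q ∧ etaMap cs s v' b' = r) := by
  have hcan : ∀ x : W, x * cs.simple s * cs.simple s = x := fun x => by
    rw [mul_assoc, cs.simple_mul_simple_self, mul_one]
  have hus : cs.length u < cs.length (u * cs.simple s) :=
    bruhatLE_length_lt cs hu.1 hu.2
  have hws : cs.length w < cs.length (w * cs.simple s) :=
    bruhatLE_length_lt cs hw.1 hw.2
  have hw_le_ws : bruhatLE cs w (w * cs.simple s) := hw.1
  have hws_desc : cs.length (w * cs.simple s * cs.simple s) < cs.length (w * cs.simple s) := by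
    rw [hcan w]; exact hws
  refine ⟨?_, ?_, ?_⟩
  · -- well-defined
    intro v b huv hvw
    have hvws : bruhatLE cs v (w * cs.simple s) := bruhatLE_trans cs hvw hw_le_ws
    cases b with
    | false => rw [etaMap_false]; exact ⟨huv, hvws⟩
    | true =>
      rw [etaMap_true]
      by_cases hlt : bruhatLT cs v (v * cs.simple s)
      · rw [if_pos hlt]
        have hvasc : cs.length v < cs.length (v * cs.simple s) :=
          bruhatLE_length_lt cs hlt.1 hlt.2
        exact ⟨bruhatLE_trans cs huv hlt.1,
          mul_simple_le_mul_simple_of_asc cs hvw hvasc hws⟩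
      · rw [if_neg hlt]
        exact ⟨huv, hvws⟩
  · -- order-preserving
    intro v v' b b' huv hvw huv' hv'w hvv' hbb'
    cases b' with
    | false =>
      have hb : b = false := by
        cases b
        · rfl
        · exact absurd hbb' (by simp)
      rw [hb, etaMap_false, etaMap_false]
      exact hvv'
    | true =>
      rw [etaMap_true]
      cases b with
      | false =>
        rw [etaMap_false]
        by_cases hlt' : bruhatLT cs v' (v' * cs.simple s)
        · rw [if_pos hlt']
          exact bruhatLE_trans cs hvv' hlt'.1
        · rw [if_neg hlt']
          exact hvv'
      | true =>
        rw [etaMap_true]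
        by_cases hlt : bruhatLT cs v (v * cs.simple s)
        · rw [if_pos hlt]
          have hvasc : cs.length v < cs.length (v * cs.simple s) :=
            bruhatLE_length_lt cs hlt.1 hlt.2
          by_cases hlt' : bruhatLT cs v' (v' * cs.simple s)
          · rw [if_pos hlt']
            have hv'asc : cs.length v' < cs.length (v' * cs.simple s) :=
              bruhatLE_length_lt cs hlt'.1 hlt'.2
            exact mul_simple_le_mul_simple_of_asc cs hvv' hvasc hv'asc
          · rw [if_neg hlt']
            have hv'desc : cs.length (v' * cs.simple s) < cs.length v' := by
              rcases cs.length_mul_simple v' s with h' | h'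
              · exact absurd ((bruhatLT_mul_simple_iff cs).mpr (by omega)) hlt'
              · omega
            have h1 : bruhatLE cs v (v' * cs.simple s) :=
              le_mul_simple_of_desc cs hvv' hvasc hv'desc
            have h2 := mul_simple_le_mul_simple_of_asc cs h1 hvasc
              (by rw [hcan v']; exact hv'desc)
            rwa [hcan v'] at h2
        · rw [if_neg hlt]
          by_cases hlt' : bruhatLT cs v' (v' * cs.simple s)
          · rw [if_pos hlt']
            exact bruhatLE_trans cs hvv' hlt'.1
          · rw [if_neg hlt']
            exact hvv'
  · -- order-projection
    intro q r huq hqr hrws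
    have hur : bruhatLE cs u r := bruhatLE_trans cs huq hqr
    rcases cs.length_mul_simple r s with hr | hr
    · -- r ascent : use (q, false) ≤ (r, false)
      have hrw : bruhatLE cs r w := by
        have := le_mul_simple_of_desc cs hrws (by omega) hws_desc
        rwa [hcan w] at this
      exact ⟨q, r, false, false, huq, bruhatLE_trans cs hqr hrw, hur, hrw, hqr,
        le_refl _, etaMap_false cs s q, etaMap_false cs s r⟩
    · -- r descent
      have hrs_w : bruhatLE cs (r * cs.simple s) w := by
        have := mul_simple_le_mul_simple_of_desc cs hrws (by omega) hws_desc
        rwa [hcan w] at this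
      have hu_rs : bruhatLE cs u (r * cs.simple s) :=
        le_mul_simple_of_desc cs hur hus (by omega)
      have hηrs : etaMap cs s (r * cs.simple s) true = r := by
        rw [etaMap_true, if_pos ((bruhatLT_mul_simple_iff cs).mpr
          (by rw [hcan r]; omega)), hcan r]
      rcases cs.length_mul_simple q s with hq2 | hq2
      · -- q ascent : use (q, false) ≤ (r sᵢ, true)
        have hq_rs : bruhatLE cs q (r * cs.simple s) :=
          le_mul_simple_of_desc cs hqr (by omega) (by omega)
        exact ⟨q, r * cs.simple s, false, true, huq,
          bruhatLE_trans cs hq_rs hrs_w, hu_rs, hrs_w, hq_rs,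
          by simp, etaMap_false cs s q, hηrs⟩
      · -- q descent : use (q sᵢ, true) ≤ (r sᵢ, true)
        have hqs_rs : bruhatLE cs (q * cs.simple s) (r * cs.simple s) :=
          mul_simple_le_mul_simple_of_desc cs hqr (by omega) (by omega)
        have hu_qs : bruhatLE cs u (q * cs.simple s) :=
          le_mul_simple_of_desc cs huq hus (by omega)
        have hηqs : etaMap cs s (q * cs.simple s) true = q := by
          rw [etaMap_true, if_pos ((bruhatLT_mul_simple_iff cs).mpr
            (by rw [hcan q]; omega)), hcan q]
        exact ⟨q * cs.simple s, r * cs.simple s, true, true, hu_qs,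
          bruhatLE_trans cs hqs_rs hrs_w, hu_rs, hrs_w, hqs_rs,
          le_refl _, hηqs, hηrs⟩
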